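/- Let w₋₂, w₋₁, w₀, w₁ be strictly positive real numbers and set x = w₋₁/w₀, y = w₁/w₀, z = w₋₂/w₀. Let p be the complex cubic polynomial p(X) = w₋₂·X³ + w₋₁·X² + w₀·X + w₁, and assume p has no root of modulus exactly 1. If z − z² − x·y + y² < 0, 1 − x − y + z > 0, and |y − x| − 2z ≤ 0, then all three roots of p (counted with multiplicity) lie in the open unit disk {ζ ∈ ℂ : |ζ| < 1}. -/

import Mathlib

-- Nonreal case: any nonreal root has |ζ|² < 1
lemma aux_nonreal (x y z a b : ℝ) (hx : 0 < x) (hy : 0 < y) (hz : 0 < z)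
    (hC3 : z - z ^ 2 - x * y + y ^ 2 < 0)
    (hb : b ≠ 0)
    (hre : z*a^3 - 3*z*a*b^2 + x*a^2 - x*b^2 + a + y = 0)
    (him : b*(3*z*a^2 - z*b^2 + 2*x*a + 1) = 0)
    (hm1 : a^2 + b^2 ≠ 1) :
    a^2 + b^2 < 1 := by
  set m := a^2 + b^2 with hm
  have him' : 3*z*a^2 - z*b^2 + 2*x*a + 1 = 0 := by
    rcases mul_eq_zero.mp him with h | h
    · exact absurd h hb
    · exact h
  have h2 : z*m = 4*z*a^2 + 2*x*a + 1 := by rw [hm]; linear_combination -him'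
  have h3 : y = m*(2*z*a + x) := by rw [hm]; linear_combination hre - a*him'
  by_contra hge
  push_neg at hge
  have hmgt : 1 < m := lt_of_le_of_ne hge (Ne.symm hm1)
  have hb2 : 0 < b^2 := by positivity
  have hpos1 : 0 < z^2 - z + x*y - y^2 := by linarith
  have hQ : 0 < y^2 + 2*a*y*z + m*z^2 := by nlinarith [sq_nonneg (y + a*z), sq_nonneg z, mul_pos hb2 (by positivity : (0:ℝ) < z^2)]
  have key : y*(z^2 - z + x*y - y^2)*m = y*(1-m)*(y^2 + 2*a*y*z + m*z^2) := by
    rw [h3]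
    linear_combination (m^2*(2*z*a+x)*z) * h2
  nlinarith [mul_pos (mul_pos hy hpos1) (by linarith : (0:ℝ) < m), mul_pos hy hQ]

set_option maxHeartbeats 1000000 in

lemma aux_real (x y z t₀ : ℝ) (hx : 0 < x) (hy : 0 < y) (hz : 0 < z)
    (hC3 : z - z ^ 2 - x * y + y ^ 2 < 0)
    (hC2 : 1 - x - y + z > 0)
    (hC4 : |y - x| - 2 * z ≤ 0)
    (hroot : z*t₀^3 + x*t₀^2 + t₀ + y = 0)
    (hne : t₀ ≠ -1) :
    -1 < t₀ ∧ t₀ < 0 := by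
  have ht0neg : t₀ < 0 := by
    by_contra h; push_neg at h
    nlinarith [mul_nonneg hz.le (pow_nonneg h 3), mul_nonneg hx.le (pow_nonneg h 2)]
  refine ⟨?_, ht0neg⟩
  by_contra hle; push_neg at hle
  have hlt : t₀ < -1 := lt_of_le_of_ne hle hne
  -- IVT root r₀ ∈ (-1,0)
  have hcont : ContinuousOn (fun t : ℝ => z*t^3 + x*t^2 + t + y) (Set.Icc (-1) 0) :=
    (by continuity : Continuous fun t : ℝ => z*t^3 + x*t^2 + t + y).continuousOn
  have hivt := intermediate_value_Ioo (by norm_num : (-1:ℝ) ≤ 0) hcont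
  have h0mem : (0:ℝ) ∈ Set.Ioo (z*(-1:ℝ)^3 + x*(-1)^2 + (-1) + y) (z*(0:ℝ)^3 + x*0^2 + 0 + y) := by
    constructor <;> [nlinarith; nlinarith]
  obtain ⟨r₀, hr₀mem, hfr₀⟩ := hivt h0mem
  obtain ⟨hr₀1, hr₀0⟩ := hr₀mem
  simp only [] at hfr₀
  have ht0ne : t₀ ≠ 0 := ht0neg.ne
  obtain ⟨B, hB⟩ : ∃ B : ℝ, z*B = x + z*t₀ := ⟨(x + z*t₀)/z, by field_simp⟩
  obtain ⟨Cc, hCcz⟩ : ∃ Cc : ℝ, z*t₀*Cc = -y := ⟨-y/(z*t₀), by field_simp⟩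
  have he2 : z*Cc - z*B*t₀ = 1 := by
    have he2' : t₀*(z*Cc - z*B*t₀) = t₀*1 := by
      linear_combination hCcz - t₀^2*hB - hroot
    exact mul_left_cancel₀ ht0ne he2'
  -- r₀ is a root of the quadratic
  have hfact : z*(r₀ - t₀)*(r₀^2 + B*r₀ + Cc) = 0 := by
    linear_combination hfr₀ + r₀^2*hB + r₀*he2 - hCcz
  have hq0 : r₀^2 + B*r₀ + Cc = 0 := by
    have h1 : z*(r₀ - t₀) ≠ 0 := by
      refine mul_ne_zero hz.ne' ?_
      intro h; have := sub_eq_zero.mp h; linarith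
    exact (mul_eq_zero.mp hfact).resolve_left h1
  -- the other quadratic root v := -B - r₀
  obtain ⟨v, hBv⟩ : ∃ v : ℝ, B = -v - r₀ := ⟨-B - r₀, by ring⟩
  have hqv : v^2 + B*v + Cc = 0 := by linear_combination hq0 + (v - r₀)*hBv
  have hfv : z*v^3 + x*v^2 + v + y = 0 := by
    linear_combination z*(v - t₀)*hqv - v^2*hB - v*he2 + hCcz
  have hvneg : v < 0 := by
    by_contra h; push_neg at h
    nlinarith [mul_nonneg hz.le (pow_nonneg h 3), mul_nonneg hx.le (pow_nonneg h 2)]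
  -- symmetric function relations in t₀, r₀, v
  have hxE : x = -z*(t₀ + r₀ + v) := by linear_combination -hB + z*hBv
  have hCr : Cc = r₀*v := by linear_combination hq0 - r₀*hBv
  have hyE : y = -z*(t₀*r₀*v) := by linear_combination hCcz - z*t₀*hCr
  have he2E : (1:ℝ) = z*(t₀*r₀ + t₀*v + r₀*v) := by
    linear_combination -he2 + z*hCr - z*t₀*hBv
  -- C2 forces v < -1
  have hfac2 : 1 - x - y + z = z*(1+t₀)*(1+r₀)*(1+v) := by
    linear_combination he2E - hxE - hyE
  have hvlt : v < -1 := by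
    by_contra h; push_neg at h
    have h3 : (0:ℝ) ≤ 1 + v := by linarith
    nlinarith [mul_nonneg (mul_nonneg (mul_pos hz (by linarith : (0:ℝ) < -(1+t₀))).le
      (by linarith : (0:ℝ) ≤ 1 + r₀)) h3]
  -- C3 gives G > 0
  have hid : z^2 - z + x*y - y^2 = z^2*((1 - t₀*r₀)*(1 - t₀*v)*(1 - r₀*v)) := by
    linear_combination (-z)*he2E + (x - y + z*t₀*r₀*v)*hyE + (-z*t₀*r₀*v)*hxE
  have hG : 0 < (1 - t₀*r₀)*(1 - t₀*v)*(1 - r₀*v) := by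
    nlinarith [sq_nonneg z, hid]
  have hab3 : 1 - t₀*v < 0 := by
    nlinarith [mul_pos (by linarith : (0:ℝ) < -t₀-1) (by linarith : (0:ℝ) < -v-1)]
  have hmix : (1 - t₀*r₀)*(1 - r₀*v) < 0 := by
    by_contra h; push_neg at h
    nlinarith [mul_nonpos_of_nonpos_of_nonneg hab3.le h]
  -- C4 gives bound 2
  have hxy : x - y ≤ 2*z := by
    have h := abs_le.mp (by linarith : |y - x| ≤ 2*z)
    linarith [h.1]
  have hQx : z*(-(t₀+r₀+v) + t₀*r₀*v) = x - y := by linear_combination -hxE + hyE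
  have hH2 : -(t₀+r₀+v) + t₀*r₀*v ≤ 2 := by
    have h1 : z*(-(t₀+r₀+v) + t₀*r₀*v) ≤ z*2 := by linarith
    exact (mul_le_mul_iff_right₀ hz).mp h1
  nlinarith [hmix, sq_nonneg (1 + r₀),
    mul_nonneg (by linarith : (0:ℝ) ≤ 2 - (-(t₀+r₀+v) + t₀*r₀*v)) (by linarith : (0:ℝ) ≤ -r₀)]

open Polynomial

/-- **The `|γ| = 2` row of Table S1.** For positive hoppings `w₋₂, w₋₁, w₀, w₁`
with `x = w₋₁/w₀`, `y = w₁/w₀`, `z = w₋₂/w₀`, if the cubic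
`p(X) = w₋₂ X³ + w₋₁ X² + w₀ X + w₁` has no root on the unit circle and
`z - z² - x y + y² < 0`, `1 - x - y + z > 0`, `|y - x| - 2z ≤ 0`, then all roots
of `p` lie in the open unit disk. -/
theorem winding_two_roots_in_disk
    (wm2 wm1 w0 w1 : ℝ)
    (hm2 : 0 < wm2) (hm1 : 0 < wm1) (h0 : 0 < w0) (h1 : 0 < w1)
    (x y z : ℝ) (hx : x = wm1 / w0) (hy : y = w1 / w0) (hz : z = wm2 / w0)
    (p : Polynomial ℂ)
    (hp : p = C (wm2 : ℂ) * X ^ 3 + C (wm1 : ℂ) * X ^ 2 + C (w0 : ℂ) * X + C (w1 : ℂ))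
    (hcirc : ∀ ζ : ℂ, p.IsRoot ζ → ‖ζ‖ ≠ 1)
    (hC3 : z - z ^ 2 - x * y + y ^ 2 < 0)
    (hC2 : 1 - x - y + z > 0)
    (hC4 : |y - x| - 2 * z ≤ 0) :
    ∀ ζ : ℂ, p.IsRoot ζ → ‖ζ‖ < 1 := by
  intro ζ hr
  have hw0 : (w0:ℂ) ≠ 0 := by exact_mod_cast h0.ne'
  have hxp : 0 < x := hx ▸ div_pos hm1 h0
  have hyp : 0 < y := hy ▸ div_pos h1 h0
  have hzp : 0 < z := hz ▸ div_pos hm2 h0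
  have habs := hcirc ζ hr
  have E : (z:ℂ)*ζ^3 + (x:ℂ)*ζ^2 + ζ + (y:ℂ) = 0 := by
    have hr' := hr
    simp [hp, IsRoot] at hr'
    rw [hx, hy, hz]; push_cast; field_simp
    linear_combination hr'
  have hre := congrArg Complex.re E
  have him := congrArg Complex.im E
  simp [pow_succ, Complex.mul_re, Complex.mul_im] at hre him
  have hre' : z*ζ.re^3 - 3*z*ζ.re*ζ.im^2 + x*ζ.re^2 - x*ζ.im^2 + ζ.re + y = 0 := by
    linear_combination hre
  have him' : ζ.im*(3*z*ζ.re^2 - z*ζ.im^2 + 2*x*ζ.re + 1) = 0 := by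
    linear_combination him
  have habs2 : (‖ζ‖)^2 = ζ.re^2 + ζ.im^2 := by
    rw [Complex.sq_norm, Complex.normSq_apply]; ring
  by_cases hb : ζ.im = 0
  · -- real root case
    have hroot : z*ζ.re^3 + x*ζ.re^2 + ζ.re + y = 0 := by
      rw [hb] at hre'; linear_combination hre'
    have hne : ζ.re ≠ -1 := by
      intro h
      apply habs
      have hζ : ζ = ((-1 : ℝ) : ℂ) := Complex.ext (by simp [h]) (by simp [hb])
      rw [hζ, Complex.norm_real, Real.norm_eq_abs]; norm_num
    obtain ⟨hg1, hg2⟩ := aux_real x y z ζ.re hxp hyp hzp hC3 hC2 hC4 hroot hne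
    have hζ : ζ = ((ζ.re : ℝ) : ℂ) := Complex.ext rfl (by simp [hb])
    rw [hζ, Complex.norm_real, Real.norm_eq_abs]
    rw [abs_lt]; constructor <;> linarith
  · -- nonreal root case
    have hm1' : ζ.re^2 + ζ.im^2 ≠ 1 := by
      intro h
      apply habs
      have hsq : (‖ζ‖)^2 = 1 := by rw [habs2, h]
      have h2 : (‖ζ‖ - 1)*(‖ζ‖ + 1) = 0 := by linear_combination hsq
      rcases mul_eq_zero.mp h2 with h3 | h3
      · linarith
      · linarith [norm_nonneg ζ]
    have hlt := aux_nonreal x y z ζ.re ζ.im hxp hyp hzp hC3 hb hre' him' hm1'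
    nlinarith [norm_nonneg ζ, habs2]
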